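/- arXiv:1204.0503 — 2 statements merged into one kernel-verified Lean document; each statement's English description precedes it below -/
import Mathlib

section
/- Let p be an odd prime, let (G,γ) be a ℤ/pℤ-colored graph, let G' be a connected subgraph of G, and let G̃' be the lift of G' in the symmetric lift of (G,γ). Then G̃' is connected if and only if G' has nonzero ρ-rank. -/
/-!
Preamble: finite directed multigraphs with edge colors in an abelian group
("colored graphs"), gain groups and ρ-rank, the Ross / cone-Laman /
cylinder-Laman sparsity counts, colored Henneberg moves, undirected
multigraphs, (k,ℓ)-sparsity, uncolored Henneberg moves, and symmetric lifts.
-/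

/-- A finite directed multigraph with edge colors in `Γ` (a "Γ-colored graph").
Self-loops and parallel edges are allowed. -/
structure CMG (Γ : Type) where
  V : Type
  E : Type
  finV : Finite V
  finE : Finite E
  src : E → V
  dst : E → V
  color : E → Γ

attribute [instance] CMG.finV CMG.finE

instance {α : Type*} [Finite α] : Finite (Option α) :=
  Finite.of_equiv _ (Equiv.optionEquivSumPUnit.{0} α).symm

namespace CMG

variable {Γ : Type} [AddCommGroup Γ]

/-- `e` is an edge from `a` to `v` with color `c`, in the oriented sense:
either it is stored as `a → v` with color `c`, or as `v → a` with color `-c`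
(reversing an edge while negating its color gives the same colored graph). -/
def IsEdgeFromTo (G : CMG Γ) (e : G.E) (a v : G.V) (c : Γ) : Prop :=
  (G.src e = a ∧ G.dst e = v ∧ G.color e = c) ∨
    (G.src e = v ∧ G.dst e = a ∧ G.color e = -c)

/-- `e` is incident to the vertex `v`. -/
def Incident (G : CMG Γ) (e : G.E) (v : G.V) : Prop :=
  G.src e = v ∨ G.dst e = v

/-- `e` is a self-loop at `v`. -/
def IsLoopAt (G : CMG Γ) (e : G.E) (v : G.V) : Prop :=
  G.src e = v ∧ G.dst e = v

/-- The vertices of the edge-induced subgraph on the edge set `F`. -/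
def vertsIn (G : CMG Γ) (F : Set G.E) : Set G.V :=
  {v | ∃ e ∈ F, G.Incident e v}

/-- `Walk G F u w γ`: there is a walk inside the edge set `F` from `u` to `w`
whose signed color sum (colors of forward-traversed edges added, colors of
backward-traversed edges subtracted) is `γ`. -/
inductive Walk (G : CMG Γ) (F : Set G.E) : G.V → G.V → Γ → Prop
  | nil (v : G.V) : Walk G F v v 0
  | fwd {x : G.V} {γ : Γ} (e : G.E) (he : e ∈ F) (hw : Walk G F (G.dst e) x γ) :
      Walk G F (G.src e) x (G.color e + γ)
  | bwd {x : G.V} {γ : Γ} (e : G.E) (he : e ∈ F) (hw : Walk G F (G.src e) x γ) :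
      Walk G F (G.dst e) x (-G.color e + γ)

/-- `u` and `w` are joined by a walk in the edge set `F`. -/
def Reaches (G : CMG Γ) (F : Set G.E) (u w : G.V) : Prop :=
  ∃ γ, G.Walk F u w γ

/-- The connected component of `v` in the edge set `F`. -/
def comp (G : CMG Γ) (F : Set G.E) (v : G.V) : Set G.V :=
  {w | G.Reaches F v w}

/-- The gain group (ρ-image) of the edge set `F` based at the vertex `v`:
the subgroup of `Γ` generated by the signed color sums of closed walks at `v`. -/
def gainGroup (G : CMG Γ) (F : Set G.E) (v : G.V) : AddSubgroup Γ :=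
  AddSubgroup.closure {γ | G.Walk F v v γ}

/-- The ρ-image of the whole edge set `F` (over all base vertices). -/
def totalGain (G : CMG Γ) (F : Set G.E) : AddSubgroup Γ :=
  AddSubgroup.closure {γ | ∃ v, G.Walk F v v γ}

end CMG

/-- The rank of a subgroup of an abelian group: the minimal cardinality of a
finite generating set. -/
noncomputable def subgroupRank {Γ : Type} [AddCommGroup Γ] (H : AddSubgroup Γ) : ℕ :=
  sInf {n | ∃ s : Finset Γ, s.card = n ∧ AddSubgroup.closure (s : Set Γ) = H}

namespace CMG

variable {Γ : Type} [AddCommGroup Γ]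

/-- The number of connected components of the edge-induced subgraph on `F`
whose ρ-rank is `i`. -/
noncomputable def compCount (G : CMG Γ) (F : Set G.E) (i : ℕ) : ℕ :=
  Set.ncard {S : Set G.V |
    ∃ v ∈ G.vertsIn F, S = G.comp F v ∧ subgroupRank (G.gainGroup F v) = i}

/-- The number of connected components of the whole graph (all vertices,
all edges) whose ρ-rank is `i`. -/
noncomputable def compCountTop (G : CMG Γ) (i : ℕ) : ℕ :=
  Set.ncard {S : Set G.V |
    ∃ v : G.V, S = G.comp Set.univ v ∧ subgroupRank (G.gainGroup Set.univ v) = i}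

/-- The Ross count `m' ≤ 2n' - 3c₀' - 2(c₁' + c₂')` for one edge set. -/
def RossCount (G : CMG Γ) (F : Set G.E) : Prop :=
  (F.ncard : ℤ) ≤ 2 * (G.vertsIn F).ncard - 3 * G.compCount F 0
    - 2 * (G.compCount F 1 + G.compCount F 2)

/-- Ross sparsity: the Ross count holds for every edge-induced subgraph. -/
def IsRossSparse (G : CMG Γ) : Prop :=
  ∀ F : Set G.E, G.RossCount F

/-- A Ross graph: Ross-sparse and the count holds with equality on the whole
graph. -/
def IsRossGraph (G : CMG Γ) : Prop :=
  G.IsRossSparse ∧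
    (Nat.card G.E : ℤ) = 2 * Nat.card G.V - 3 * G.compCountTop 0
      - 2 * (G.compCountTop 1 + G.compCountTop 2)

/-- The cone-Laman count `m' ≤ 2n' - 3c₀' - c₁' - c₂'` for one edge set. -/
def ConeLamanCount (G : CMG Γ) (F : Set G.E) : Prop :=
  (F.ncard : ℤ) ≤ 2 * (G.vertsIn F).ncard - 3 * G.compCount F 0
    - G.compCount F 1 - G.compCount F 2

/-- Cone-Laman sparsity. -/
def IsConeLamanSparse (G : CMG Γ) : Prop :=
  ∀ F : Set G.E, G.ConeLamanCount F

/-- A cone-Laman graph: cone-Laman-sparse with equality on the whole graph. -/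
def IsConeLaman (G : CMG Γ) : Prop :=
  G.IsConeLamanSparse ∧
    (Nat.card G.E : ℤ) = 2 * Nat.card G.V - 3 * G.compCountTop 0
      - G.compCountTop 1 - G.compCountTop 2

/-- The cylinder-Laman count `m' ≤ 2n' + r - 3c₀' - 2(c₁' + c₂')`. -/
def CylinderLamanCount (G : CMG Γ) (F : Set G.E) : Prop :=
  (F.ncard : ℤ) ≤ 2 * (G.vertsIn F).ncard + subgroupRank (G.totalGain F)
    - 3 * G.compCount F 0 - 2 * (G.compCount F 1 + G.compCount F 2)

/-- Cylinder-Laman sparsity. -/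
def IsCylinderLamanSparse (G : CMG Γ) : Prop :=
  ∀ F : Set G.E, G.CylinderLamanCount F

/-- A cylinder-Laman graph: cylinder-Laman-sparse with equality on the whole
graph. -/
def IsCylinderLaman (G : CMG Γ) : Prop :=
  G.IsCylinderLamanSparse ∧
    (Nat.card G.E : ℤ) = 2 * Nat.card G.V + subgroupRank (G.totalGain Set.univ)
      - 3 * G.compCountTop 0 - 2 * (G.compCountTop 1 + G.compCountTop 2)

/-- Isomorphism of colored graphs; an edge may be reversed provided its color
is negated (which represents the same colored graph). -/
def Iso (G H : CMG Γ) : Prop :=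
  ∃ (fv : G.V ≃ H.V) (fe : G.E ≃ H.E), ∀ e : G.E,
    (H.src (fe e) = fv (G.src e) ∧ H.dst (fe e) = fv (G.dst e) ∧
      H.color (fe e) = G.color e) ∨
    (H.src (fe e) = fv (G.dst e) ∧ H.dst (fe e) = fv (G.src e) ∧
      H.color (fe e) = -G.color e)

/-- Delete a vertex and all edges incident to it. -/
def deleteVertex (G : CMG Γ) (v : G.V) : CMG Γ where
  V := {w : G.V // w ≠ v}
  E := {e : G.E // G.src e ≠ v ∧ G.dst e ≠ v}
  finV := inferInstance
  finE := inferInstance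
  src := fun e => ⟨G.src e.1, e.2.1⟩
  dst := fun e => ⟨G.dst e.1, e.2.2⟩
  color := fun e => G.color e.1

/-- Add a single new directed edge from `x` to `y` with color `c`. -/
def addEdge (G : CMG Γ) (x y : G.V) (c : Γ) : CMG Γ where
  V := G.V
  E := Option G.E
  finV := inferInstance
  finE := inferInstance
  src := fun e => e.elim x G.src
  dst := fun e => e.elim y G.dst
  color := fun e => e.elim c G.color

/-- The other endpoint of an edge incident to `v` (junk value on loops). -/
noncomputable def otherEnd (G : CMG Γ) (v : G.V) (e : G.E) : G.V :=
  @ite _ (G.src e = v) (Classical.dec _) (G.dst e) (G.src e)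

/-- The color of an edge incident to `v`, read in the direction pointing into
`v` (junk value on loops). -/
noncomputable def colorInto (G : CMG Γ) (v : G.V) (e : G.E) : Γ :=
  @ite _ (G.dst e = v) (Classical.dec _) (G.color e) (-G.color e)

/-- The colored Henneberg move (H1c): `H` is obtained from `G` by adding one
new vertex `v` and two new edges `av`, `bv` (directed into `v`, which is no
restriction); if `a = b` the two new colors must be distinct. -/
def H1cRel (G H : CMG Γ) : Prop :=
  ∃ (v a b : H.V) (_ : a ≠ v) (_ : b ≠ v) (e₁ e₂ : H.E) (γ₁ γ₂ : Γ),
    e₁ ≠ e₂ ∧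
    H.IsEdgeFromTo e₁ a v γ₁ ∧ H.IsEdgeFromTo e₂ b v γ₂ ∧
    (∀ e, H.Incident e v → e = e₁ ∨ e = e₂) ∧
    (a = b → γ₁ ≠ γ₂) ∧
    Iso G (H.deleteVertex v)

/-- The colored lollipop move (H1c'): `H` is obtained from `G` by adding one
new vertex `v`, one edge `av` with arbitrary color, and one self-loop at `v`
with nonzero color. -/
def H1cpRel (G H : CMG Γ) : Prop :=
  ∃ (v a : H.V) (_ : a ≠ v) (e₁ e₂ : H.E) (γ₁ : Γ),
    e₁ ≠ e₂ ∧
    H.IsEdgeFromTo e₁ a v γ₁ ∧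
    H.IsLoopAt e₂ v ∧ H.color e₂ ≠ 0 ∧
    (∀ e, H.Incident e v → e = e₁ ∨ e = e₂) ∧
    Iso G (H.deleteVertex v)

/-- The colored Henneberg move (H2c): `H` is obtained from `G` by removing an
edge `ab` with color `γ₁ - γ₂`, adding a new vertex `v`, and adding edges
`av`, `bv`, `cv` with colors `γ₁`, `γ₂`, `γ₃` (oriented into `v`, which is no
restriction); parallel new edges must have distinct colors. -/
def H2cRel (G H : CMG Γ) : Prop :=
  ∃ (v a b c : H.V) (ha : a ≠ v) (hb : b ≠ v) (_ : c ≠ v)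
      (e₁ e₂ e₃ : H.E) (γ₁ γ₂ γ₃ : Γ),
    e₁ ≠ e₂ ∧ e₁ ≠ e₃ ∧ e₂ ≠ e₃ ∧
    H.IsEdgeFromTo e₁ a v γ₁ ∧ H.IsEdgeFromTo e₂ b v γ₂ ∧
    H.IsEdgeFromTo e₃ c v γ₃ ∧
    (∀ e, H.Incident e v → e = e₁ ∨ e = e₂ ∨ e = e₃) ∧
    (a = b → γ₁ ≠ γ₂) ∧ (a = c → γ₁ ≠ γ₃) ∧ (b = c → γ₂ ≠ γ₃) ∧
    Iso G ((H.deleteVertex v).addEdge ⟨a, ha⟩ ⟨b, hb⟩ (γ₁ - γ₂))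

/-- The base graph for Ross graphs: two vertices joined by two parallel
directed edges with distinct colors. -/
def IsRossBase (G : CMG Γ) : Prop :=
  ∃ (u v : G.V) (e₁ e₂ : G.E) (γ₁ γ₂ : Γ),
    u ≠ v ∧ e₁ ≠ e₂ ∧
    (∀ w : G.V, w = u ∨ w = v) ∧ (∀ e : G.E, e = e₁ ∨ e = e₂) ∧
    G.IsEdgeFromTo e₁ u v γ₁ ∧ G.IsEdgeFromTo e₂ u v γ₂ ∧ γ₁ ≠ γ₂

/-- The base graph for cone-Laman and cylinder-Laman graphs: a single vertex
with one self-loop carrying a nonzero color. -/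
def IsLoopBase (G : CMG Γ) : Prop :=
  ∃ (v : G.V) (e : G.E),
    (∀ w : G.V, w = v) ∧ (∀ e' : G.E, e' = e) ∧
    G.IsLoopAt e v ∧ G.color e ≠ 0

/-- `Constructible Base R G`: the colored graph `G` can be produced from a
base graph (a graph satisfying `Base`) by a finite sequence of moves from the
relation `R`. -/
inductive Constructible (Base : CMG Γ → Prop) (R : CMG Γ → CMG Γ → Prop) :
    CMG Γ → Prop
  | base (G : CMG Γ) (h : Base G) : Constructible Base R G
  | step (G H : CMG Γ) (hG : Constructible Base R G) (hR : R G H) :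
      Constructible Base R H

/-- The degree of a vertex; a self-loop contributes two. -/
noncomputable def degree (G : CMG Γ) (v : G.V) : ℕ :=
  Nat.card {e : G.E // G.src e = v} + Nat.card {e : G.E // G.dst e = v}

end CMG

/-- Reduce the colors of a `ℤ`-colored graph modulo `p`. -/
def CMG.reduceMod (G : CMG ℤ) (p : ℕ) : CMG (ZMod p) where
  V := G.V
  E := G.E
  finV := G.finV
  finE := G.finE
  src := G.src
  dst := G.dst
  color := fun e => ((G.color e : ℤ) : ZMod p)

/-- An undirected multigraph (possibly infinite), given by the two endpoint
functions of its edges; the orientation of an edge carries no information. -/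
structure UMG where
  V : Type
  E : Type
  fst : E → V
  snd : E → V

namespace UMG

/-- The edge `e` joins `u` and `w`. -/
def Betw (M : UMG) (e : M.E) (u w : M.V) : Prop :=
  (M.fst e = u ∧ M.snd e = w) ∨ (M.fst e = w ∧ M.snd e = u)

/-- `e` is incident to `v`. -/
def Incident (M : UMG) (e : M.E) (v : M.V) : Prop :=
  M.fst e = v ∨ M.snd e = v

/-- `e` is a self-loop. -/
def IsLoop (M : UMG) (e : M.E) : Prop :=
  M.fst e = M.snd e

/-- The vertices of the edge-induced subgraph on the edge set `F`. -/
def uverts (M : UMG) (F : Set M.E) : Set M.V :=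
  {v | ∃ e ∈ F, M.Incident e v}

/-- `(k,ℓ)`-sparsity: every (finite, nonempty) edge-induced subgraph with `n'`
vertices and `m'` edges satisfies `m' ≤ k n' - ℓ`. -/
def Sparse (M : UMG) (k ℓ : ℤ) : Prop :=
  ∀ F : Set M.E, F.Finite → F.Nonempty →
    (F.ncard : ℤ) ≤ k * (M.uverts F).ncard - ℓ

/-- Laman-sparse means `(2,3)`-sparse. -/
def LamanSparse (M : UMG) : Prop :=
  M.Sparse 2 3

/-- `F` is a (finite, nonempty) violation of the Laman count. -/
def ViolatesLaman (M : UMG) (F : Set M.E) : Prop :=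
  F.Finite ∧ F.Nonempty ∧ ¬ ((F.ncard : ℤ) ≤ 2 * (M.uverts F).ncard - 3)

/-- A Laman-circuit: an edge-minimal violation of Laman sparsity. -/
def LamanCircuit (M : UMG) (C : Set M.E) : Prop :=
  M.ViolatesLaman C ∧ ∀ F : Set M.E, F ⊂ C → ¬ M.ViolatesLaman F

/-- Connectivity inside an edge set. -/
def Reaches (M : UMG) (F : Set M.E) : M.V → M.V → Prop :=
  Relation.ReflTransGen (fun u w => ∃ e ∈ F, M.Betw e u w)

/-- The edge-induced subgraph on `F` is connected. -/
def ConnectedOn (M : UMG) (F : Set M.E) : Prop :=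
  ∀ u ∈ M.uverts F, ∀ w ∈ M.uverts F, M.Reaches F u w

/-- The induced sub-multigraph on a set of vertices. -/
def induce (M : UMG) (W : Set M.V) : UMG where
  V := W
  E := {e : M.E // M.fst e ∈ W ∧ M.snd e ∈ W}
  fst := fun e => ⟨M.fst e.1, e.2.1⟩
  snd := fun e => ⟨M.snd e.1, e.2.2⟩

/-- Delete a vertex and all edges incident to it. -/
def deleteVertex (M : UMG) (v : M.V) : UMG :=
  M.induce {w | w ≠ v}

/-- Add a single new edge joining `x` and `y`. -/
def addEdge (M : UMG) (x y : M.V) : UMG where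
  V := M.V
  E := Option M.E
  fst := fun e => e.elim x M.fst
  snd := fun e => e.elim y M.snd

/-- Add a family of new edges indexed by `I`. -/
def addEdges (M : UMG) (I : Type) (x y : I → M.V) : UMG where
  V := M.V
  E := M.E ⊕ I
  fst := Sum.elim M.fst x
  snd := Sum.elim M.snd y

/-- Isomorphism of undirected multigraphs. -/
def Iso (M N : UMG) : Prop :=
  ∃ (fv : M.V ≃ N.V) (fe : M.E ≃ N.E), ∀ e : M.E,
    (N.fst (fe e) = fv (M.fst e) ∧ N.snd (fe e) = fv (M.snd e)) ∨
    (N.fst (fe e) = fv (M.snd e) ∧ N.snd (fe e) = fv (M.fst e))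

/-- The other endpoint of an edge incident to `v` (junk value on loops). -/
noncomputable def otherEnd (M : UMG) (v : M.V) (e : M.E) : M.V :=
  @ite _ (M.fst e = v) (Classical.dec _) (M.snd e) (M.fst e)

/-- The uncolored Henneberg move (H1), adding the vertex `w`: `N` is obtained
from `M` by adding the new vertex `w` together with two edges joining `w` to
the old graph. -/
def H1At (M N : UMG) (w : N.V) : Prop :=
  (∃ e₁ e₂ : N.E, e₁ ≠ e₂ ∧ N.Incident e₁ w ∧ N.Incident e₂ w ∧
      ¬ N.IsLoop e₁ ∧ ¬ N.IsLoop e₂ ∧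
      ∀ e, N.Incident e w → e = e₁ ∨ e = e₂) ∧
    Iso (N.deleteVertex w) M

/-- The uncolored Henneberg move (H2), splitting an edge between `x` and `y`
and adding the new degree-three vertex `w`: `N` is obtained from `M` by
removing an edge joining `x` and `y` and adding the new vertex `w` together
with edges from `w` to `x`, `y` and some third vertex `z`. -/
def H2SplitAt (M N : UMG) (w x y : N.V) : Prop :=
  (∃ e₁ e₂ e₃ : N.E, e₁ ≠ e₂ ∧ e₁ ≠ e₃ ∧ e₂ ≠ e₃ ∧
      N.Betw e₁ x w ∧ N.Betw e₂ y w ∧ (∃ z, z ≠ w ∧ N.Betw e₃ z w) ∧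
      ∀ e, N.Incident e w → e = e₁ ∨ e = e₂ ∨ e = e₃) ∧
    ∃ (hx : x ≠ w) (hy : y ≠ w),
      Iso ((N.deleteVertex w).addEdge ⟨x, hx⟩ ⟨y, hy⟩) M

/-- The uncolored Henneberg move (H2). -/
def H2Rel (M N : UMG) : Prop :=
  ∃ w x y : N.V, H2SplitAt M N w x y

/-- `(2,2)`-spanning: the graph contains a spanning `(2,2)`-graph. -/
def Spanning22 (M : UMG) : Prop :=
  ∃ F : Set M.E, F.Finite ∧
    (∀ F' : Set M.E, F' ⊆ F → F'.Nonempty →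
      (F'.ncard : ℤ) ≤ 2 * (M.uverts F').ncard - 2) ∧
    (F.ncard : ℤ) = 2 * Nat.card M.V - 2

end UMG

namespace CMG

variable {Γ : Type} [AddCommGroup Γ]

/-- The symmetric lift of a `Γ`-colored graph: vertices `V × Γ`, and each
directed edge `ij` of color `γ` lifts to the edges `{ĩ_δ, j̃_{γ+δ}}`. -/
def liftU (G : CMG Γ) : UMG where
  V := G.V × Γ
  E := G.E × Γ
  fst := fun e => (G.src e.1, e.2)
  snd := fun e => (G.dst e.1, G.color e.1 + e.2)

/-- The lift of an edge set: the union of the fibers over its edges. -/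
def liftEdges (G : CMG Γ) (F : Set G.E) : Set (G.liftU).E :=
  {e | e.1 ∈ F}

/-- The concrete result of the colored Henneberg move (H1c) on `G`, adding a
new vertex `none` and two new edges `a → none`, `b → none` with colors
`γ₁`, `γ₂`. -/
def applyH1c (G : CMG Γ) (a b : G.V) (γ₁ γ₂ : Γ) : CMG Γ where
  V := Option G.V
  E := G.E ⊕ Bool
  finV := inferInstance
  finE := inferInstance
  src := Sum.elim (fun e => some (G.src e)) (fun x => some (cond x b a))
  dst := Sum.elim (fun e => some (G.dst e)) (fun _ => none)
  color := Sum.elim G.color (fun x => cond x γ₂ γ₁)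

/-- The concrete result of the colored Henneberg move (H2c) on `G`: the edge
`f` (from `a := src f` to `b := dst f`) is removed, a new vertex `none` is
added, and edges `a → none`, `b → none`, `c → none` with colors `γ₁`, `γ₂`,
`γ₃` are added. -/
def applyH2c (G : CMG Γ) (f : G.E) (c : G.V) (γ₁ γ₂ γ₃ : Γ) : CMG Γ where
  V := Option G.V
  E := {e : G.E // e ≠ f} ⊕ Fin 3
  finV := inferInstance
  finE := inferInstance
  src := Sum.elim (fun e => some (G.src e.1))
    (fun i => ![some (G.src f), some (G.dst f), some c] i)
  dst := Sum.elim (fun e => some (G.dst e.1)) (fun _ => none)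
  color := Sum.elim (fun e => G.color e.1) (fun i => ![γ₁, γ₂, γ₃] i)

/-- The intermediate uncolored graphs between the lift of `G` and the lift of
`applyH1c G a b γ₁ γ₂`: only the new vertices `ṽ_δ` with `δ ∈ S` (and their
incident edges) are present. -/
def h1cPartial (G : CMG Γ) (a b : G.V) (γ₁ γ₂ : Γ) (S : Set Γ) : UMG :=
  (CMG.liftU (G.applyH1c a b γ₁ γ₂)).induce {w | w.1 ≠ none ∨ w.2 ∈ S}

/-- The intermediate uncolored graphs between the lift of `G` and the lift of
`applyH2c G f c γ₁ γ₂ γ₃`: only the new vertices `ṽ_δ` with `δ ∈ S` (and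
their incident edges) are present, and for `δ ∉ S` the not-yet-split fiber
edge of `f` with endpoints `ã_{δ-γ₁}`, `b̃_{δ-γ₂}` is still present. -/
def h2cPartial (G : CMG Γ) (f : G.E) (c : G.V) (γ₁ γ₂ γ₃ : Γ) (S : Set Γ) :
    UMG :=
  UMG.addEdges
    ((CMG.liftU (G.applyH2c f c γ₁ γ₂ γ₃)).induce {w | w.1 ≠ none ∨ w.2 ∈ S})
    {δ : Γ // δ ∉ S}
    (fun δ => ⟨(some (G.src f), δ.1 - γ₁), Or.inl (Option.some_ne_none _)⟩)
    (fun δ => ⟨(some (G.dst f), δ.1 - γ₂), Or.inl (Option.some_ne_none _)⟩)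

end CMG

section Aux

open CMG

variable {Γ : Type} [AddCommGroup Γ]

lemma aux_walk_trans {G : CMG Γ} {F : Set G.E} {u v w : G.V} {a b : Γ}
    (h1 : G.Walk F u v a) (h2 : G.Walk F v w b) : G.Walk F u w (a + b) := by
  induction h1 with
  | nil v => rw [zero_add]; exact h2
  | fwd e he hw ih => rw [add_assoc]; exact CMG.Walk.fwd e he (ih h2)
  | bwd e he hw ih => rw [add_assoc]; exact CMG.Walk.bwd e he (ih h2)

lemma aux_walk_nsmul {G : CMG Γ} {F : Set G.E} {v : G.V} {γ : Γ}
    (h : G.Walk F v v γ) : ∀ n : ℕ, G.Walk F v v (n • γ)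
  | 0 => by simpa using CMG.Walk.nil (G := G) (F := F) v
  | n + 1 => by
      rw [succ_nsmul]
      exact aux_walk_trans (aux_walk_nsmul h n) h

lemma aux_walk_lift {G : CMG Γ} {F : Set G.E} {u w : G.V} {γ : Γ}
    (h : G.Walk F u w γ) (δ : Γ) :
    (G.liftU).Reaches (G.liftEdges F) (u, δ) (w, δ + γ) := by
  induction h generalizing δ with
  | nil v =>
      rw [add_zero]
      exact Relation.ReflTransGen.refl
  | @fwd x γ' e he hw ih =>
      have h2 : G.color e + δ + γ' = δ + (G.color e + γ') := by abel
      have := ih (G.color e + δ)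
      rw [h2] at this
      exact Relation.ReflTransGen.head ⟨(e, δ), he, Or.inl ⟨rfl, rfl⟩⟩ this
  | @bwd x γ' e he hw ih =>
      have h2 : δ - G.color e + γ' = δ + (-G.color e + γ') := by abel
      have := ih (δ - G.color e)
      rw [h2] at this
      refine Relation.ReflTransGen.head
        ⟨(e, δ - G.color e), he, Or.inr ⟨rfl, ?_⟩⟩ this
      show (G.dst e, G.color e + (δ - G.color e)) = (G.dst e, δ)
      rw [add_sub_cancel]

lemma aux_reaches_lift {G : CMG Γ} {F : Set G.E} {a b : G.V × Γ}
    (h : (G.liftU).Reaches (G.liftEdges F) a b) :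
    ∃ γ, G.Walk F a.1 b.1 γ ∧ b.2 = a.2 + γ := by
  induction h with
  | refl => exact ⟨0, CMG.Walk.nil _, by rw [add_zero]⟩
  | @tail b c hab hbc ih =>
      obtain ⟨γ, hw, hγ⟩ := ih
      obtain ⟨e, he, hbetw⟩ := hbc
      cases hbetw with
      | inl h' =>
          obtain ⟨h1, h2⟩ := h'
          subst h1; subst h2
          refine ⟨γ + G.color e.1, aux_walk_trans hw ?_, ?_⟩
          · show G.Walk F (G.src e.1) (G.dst e.1) (G.color e.1)
            have := CMG.Walk.fwd (G := G) (F := F) e.1 he (CMG.Walk.nil _)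
            rwa [add_zero] at this
          · show G.color e.1 + e.2 = a.2 + (γ + G.color e.1)
            have h3 : e.2 = a.2 + γ := hγ
            rw [h3]; abel
      | inr h' =>
          obtain ⟨h1, h2⟩ := h'
          subst h1; subst h2
          refine ⟨γ + -G.color e.1, aux_walk_trans hw ?_, ?_⟩
          · show G.Walk F (G.dst e.1) (G.src e.1) (-G.color e.1)
            have := CMG.Walk.bwd (G := G) (F := F) e.1 he (CMG.Walk.nil _)
            rwa [add_zero] at this
          · show e.2 = a.2 + (γ + -G.color e.1)
            have h3 : G.color e.1 + e.2 = a.2 + γ := hγ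
            have h4 : e.2 = a.2 + γ - G.color e.1 := by rw [← h3]; abel
            rw [h4]; abel

lemma aux_mem_uverts {G : CMG Γ} {F : Set G.E} {v : G.V} {δ : Γ} :
    (v, δ) ∈ (G.liftU).uverts (G.liftEdges F) ↔ v ∈ G.vertsIn F := by
  constructor
  · rintro ⟨e, he, hinc⟩
    cases hinc with
    | inl h => exact ⟨e.1, he, Or.inl (congrArg Prod.fst h)⟩
    | inr h => exact ⟨e.1, he, Or.inr (congrArg Prod.fst h)⟩
  · rintro ⟨e, he, hinc⟩
    cases hinc with
    | inl h => exact ⟨(e, δ), he, Or.inl (by rw [show (G.liftU).fst (e, δ) =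
        (G.src e, δ) from rfl, h])⟩
    | inr h =>
        refine ⟨(e, δ - G.color e), he, Or.inr ?_⟩
        show (G.dst e, G.color e + (δ - G.color e)) = (v, δ)
        rw [add_sub_cancel, h]

lemma aux_rank_zero_iff {H : AddSubgroup Γ} [Finite Γ] :
    subgroupRank H = 0 ↔ H = ⊥ := by
  constructor
  · intro h
    have hf : (H : Set Γ).Finite := Set.toFinite _
    have hne : {n | ∃ s : Finset Γ, s.card = n ∧
        AddSubgroup.closure (s : Set Γ) = H}.Nonempty :=
      ⟨hf.toFinset.card, hf.toFinset, rfl,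
        by rw [Set.Finite.coe_toFinset, AddSubgroup.closure_eq]⟩
    have hmem := Nat.sInf_mem hne
    rw [show sInf {n | ∃ s : Finset Γ, s.card = n ∧
        AddSubgroup.closure (s : Set Γ) = H} = subgroupRank H from rfl, h] at hmem
    obtain ⟨s, hs0, hsH⟩ := hmem
    rw [Finset.card_eq_zero] at hs0
    subst hs0
    rw [← hsH]
    simp
  · intro h
    subst h
    refine Nat.sInf_eq_zero.mpr (Or.inl ⟨∅, rfl, by simp⟩)

end Aux
/-- Let `p` be an odd prime, `(G,γ)` a `ℤ/pℤ`-colored graph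
and `F` (the edge set of) a connected subgraph of `G`.  Then the lift of `F`
in the symmetric lift of `(G,γ)` is connected if and only if `F` has nonzero
ρ-rank. -/
theorem lift_connected_iff_rank_ne_zero (p : ℕ) (hp : p.Prime) (hodd : Odd p)
    (G : CMG (ZMod p)) (F : Set G.E) (hne : F.Nonempty)
    (hconn : ∀ u ∈ G.vertsIn F, ∀ w ∈ G.vertsIn F, G.Reaches F u w) :
    (CMG.liftU G).ConnectedOn (G.liftEdges F) ↔
      subgroupRank (G.totalGain F) ≠ 0 := by
  haveI : Fact p.Prime := ⟨hp⟩
  constructor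
  · intro hcon hrank
    have hbot : G.totalGain F = ⊥ := aux_rank_zero_iff.mp hrank
    obtain ⟨e0, he0⟩ := hne
    have hv0 : G.src e0 ∈ G.vertsIn F := ⟨e0, he0, Or.inl rfl⟩
    have h1 : ((G.src e0, (0 : ZMod p)) : (G.liftU).V) ∈
        (G.liftU).uverts (G.liftEdges F) := aux_mem_uverts.mpr hv0
    have h2 : ((G.src e0, (1 : ZMod p)) : (G.liftU).V) ∈
        (G.liftU).uverts (G.liftEdges F) := aux_mem_uverts.mpr hv0
    obtain ⟨γ, hw, hγ⟩ := aux_reaches_lift (hcon _ h1 _ h2)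
    have hγ1 : γ = 1 := by
      have : (1 : ZMod p) = 0 + γ := hγ
      rw [zero_add] at this; exact this.symm
    have hmem : γ ∈ G.totalGain F :=
      AddSubgroup.subset_closure ⟨G.src e0, hw⟩
    rw [hbot, AddSubgroup.mem_bot, hγ1] at hmem
    exact one_ne_zero hmem
  · intro hrank
    have hex : ∃ (v : G.V) (γ : ZMod p), γ ≠ 0 ∧ G.Walk F v v γ := by
      by_contra hc
      push_neg at hc
      apply hrank
      apply aux_rank_zero_iff.mpr
      apply le_bot_iff.mp
      apply (AddSubgroup.closure_le ⊥).mpr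
      rintro γ ⟨v, hw⟩
      rw [SetLike.mem_coe, AddSubgroup.mem_bot]
      by_contra hγ
      exact hc v γ hγ hw
    obtain ⟨v, γ0, hγ0, hloop⟩ := hex
    have hvF : v ∈ G.vertsIn F := by
      cases hloop with
      | nil _ => exact absurd rfl hγ0
      | fwd e he hw => exact ⟨e, he, Or.inl rfl⟩
      | bwd e he hw => exact ⟨e, he, Or.inr rfl⟩
    intro x hx y hy
    have hxF : x.1 ∈ G.vertsIn F := by
      obtain ⟨x1, x2⟩ := x; exact aux_mem_uverts.mp hx
    have hyF : y.1 ∈ G.vertsIn F := by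
      obtain ⟨y1, y2⟩ := y; exact aux_mem_uverts.mp hy
    obtain ⟨g1, hw1⟩ := hconn x.1 hxF v hvF
    obtain ⟨g2, hw2⟩ := hconn v hvF y.1 hyF
    set t : ZMod p := y.2 - x.2 - g1 - g2 with ht
    set n : ℕ := (t * γ0⁻¹).val with hn
    have hns : (n : ℕ) • γ0 = t := by
      rw [nsmul_eq_mul, hn,
        show (((t * γ0⁻¹).val : ℕ) : ZMod p) = t * γ0⁻¹ from
          ZMod.natCast_rightInverse _,
        mul_assoc, inv_mul_cancel₀ hγ0, mul_one]
    have W : G.Walk F x.1 y.1 (g1 + ((n : ℕ) • γ0 + g2)) :=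
      aux_walk_trans hw1 (aux_walk_trans (aux_walk_nsmul hloop n) hw2)
    rw [hns] at W
    have hgain : g1 + (t + g2) = y.2 - x.2 := by rw [ht]; abel
    rw [hgain] at W
    have := aux_walk_lift W x.2
    have hfix : x.2 + (y.2 - x.2) = y.2 := by abel
    rw [hfix] at this
    have hx' : (x.1, x.2) = x := rfl
    have hy' : (y.1, y.2) = y := rfl
    rwa [hx', hy'] at this
end

section
/- The uncolored Henneberg (H2) move preserves the property of being (2,2)-spanning in both directions: if G is (2,2)-spanning, then any graph obtained from G by an (H2) move is (2,2)-spanning; and if H is (2,2)-spanning and v is a vertex of H of degree three, then some graph obtained from H by a reverse (H2) move at v is (2,2)-spanning. -/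
namespace UMG
open Set

lemma iso_symm {M N : UMG} (h : Iso M N) : Iso N M := by
  obtain ⟨fv, fe, hf⟩ := h
  refine ⟨fv.symm, fe.symm, fun e => ?_⟩
  rcases hf (fe.symm e) with ⟨h1, h2⟩ | ⟨h1, h2⟩ <;>
    simp only [Equiv.apply_symm_apply] at h1 h2
  · exact Or.inl ⟨by rw [h1, Equiv.symm_apply_apply],
      by rw [h2, Equiv.symm_apply_apply]⟩
  · exact Or.inr ⟨by rw [h2, Equiv.symm_apply_apply],
      by rw [h1, Equiv.symm_apply_apply]⟩

lemma uverts_image {M N : UMG} (fv : M.V ≃ N.V) (fe : M.E ≃ N.E)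
    (hf : ∀ e : M.E,
      (N.fst (fe e) = fv (M.fst e) ∧ N.snd (fe e) = fv (M.snd e)) ∨
      (N.fst (fe e) = fv (M.snd e) ∧ N.snd (fe e) = fv (M.fst e)))
    (F : Set M.E) : N.uverts (fe '' F) = fv '' M.uverts F := by
  ext w
  simp only [uverts, Incident, mem_setOf_eq, mem_image]
  constructor
  · rintro ⟨e, ⟨e₀, he₀, rfl⟩, hinc⟩
    rcases hf e₀ with ⟨h1, h2⟩ | ⟨h1, h2⟩ <;> rcases hinc with h | h
    · exact ⟨M.fst e₀, ⟨e₀, he₀, Or.inl rfl⟩, by rw [← h, h1]⟩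
    · exact ⟨M.snd e₀, ⟨e₀, he₀, Or.inr rfl⟩, by rw [← h, h2]⟩
    · exact ⟨M.snd e₀, ⟨e₀, he₀, Or.inr rfl⟩, by rw [← h, h1]⟩
    · exact ⟨M.fst e₀, ⟨e₀, he₀, Or.inl rfl⟩, by rw [← h, h2]⟩
  · rintro ⟨u, ⟨e₀, he₀, h⟩, rfl⟩
    refine ⟨fe e₀, ⟨e₀, he₀, rfl⟩, ?_⟩
    rcases hf e₀ with ⟨h1, h2⟩ | ⟨h1, h2⟩ <;> rcases h with h | h
    · exact Or.inl (by rw [h1, h])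
    · exact Or.inr (by rw [h2, h])
    · exact Or.inr (by rw [h2, h])
    · exact Or.inl (by rw [h1, h])

lemma spanning22_of_iso {M N : UMG} (h : Iso M N) (hM : M.Spanning22) :
    N.Spanning22 := by
  obtain ⟨fv, fe, hf⟩ := h
  obtain ⟨F, hfin, hsp, hcard⟩ := hM
  refine ⟨fe '' F, hfin.image _, fun F' hsub hne => ?_, ?_⟩
  · have hsub' : fe ⁻¹' F' ⊆ F := fun a ha => by
      obtain ⟨b, hb, hab⟩ := hsub ha
      rwa [← fe.injective hab]
    have hne' : (fe ⁻¹' F').Nonempty := by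
      obtain ⟨e, he⟩ := hne
      exact ⟨fe.symm e, by simpa using he⟩
    have h1 := hsp _ hsub' hne'
    have hF' : F' = fe '' (fe ⁻¹' F') := by
      rw [Set.image_preimage_eq _ fe.surjective]
    rw [hF', uverts_image fv fe hf, ncard_image_of_injective _ fe.injective,
      ncard_image_of_injective _ fv.injective]
    exact h1
  · rw [ncard_image_of_injective _ fe.injective, ← Nat.card_congr fv]
    exact hcard

end UMG
namespace UMG
open Set

section helpers

variable {N : UMG} {v : N.V}

instance {W : Set N.V} [Finite N.E] : Finite (N.induce W).E :=
  inferInstanceAs (Finite {e : N.E // N.fst e ∈ W ∧ N.snd e ∈ W})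

instance {W : Set N.V} [Finite N.V] : Finite (N.induce W).V :=
  inferInstanceAs (Finite W)

instance [Finite N.E] : Finite (N.deleteVertex v).E :=
  inferInstanceAs (Finite (N.induce _).E)

instance [Finite N.V] : Finite (N.deleteVertex v).V :=
  inferInstanceAs (Finite (N.induce _).V)

instance {M : UMG} [Finite M.E] {a b : M.V} : Finite (M.addEdge a b).E :=
  inferInstanceAs (Finite (Option M.E))

/-- Downward projection of an edge set of the augmented graph. -/
def dE (N : UMG) (v : N.V) (S : Set (Option (N.deleteVertex v).E)) : Set N.E :=
  {e | ∃ h : N.fst e ≠ v ∧ N.snd e ≠ v, some ⟨e, h⟩ ∈ S}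

/-- Upward injection of an edge set of `N` avoiding `v`. -/
def upE (N : UMG) (v : N.V) (T : Set N.E) : Set (Option (N.deleteVertex v).E) :=
  {e | ∃ a, e = some a ∧ a.1 ∈ T}

lemma dE_avoid {S : Set (Option (N.deleteVertex v).E)} {e : N.E}
    (h : e ∈ dE N v S) : N.fst e ≠ v ∧ N.snd e ≠ v := h.1

lemma dE_mono {S S' : Set (Option (N.deleteVertex v).E)} (h : S ⊆ S') :
    dE N v S ⊆ dE N v S' := fun _ ⟨he, hm⟩ => ⟨he, h hm⟩

lemma none_not_mem_upE {T : Set N.E} : none ∉ upE N v T := by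
  rintro ⟨a, h, -⟩; exact Option.some_ne_none _ h.symm

lemma mem_upE_some {T : Set N.E} {a : (N.deleteVertex v).E} :
    some a ∈ upE N v T ↔ a.1 ∈ T := by
  constructor
  · rintro ⟨b, hb, h⟩
    obtain rfl : b = a := Option.some_injective _ hb.symm
    exact h
  · exact fun h => ⟨a, rfl, h⟩

lemma dE_upE {T : Set N.E} (hT : ∀ e ∈ T, N.fst e ≠ v ∧ N.snd e ≠ v) :
    dE N v (upE N v T) = T := by
  ext e
  constructor
  · rintro ⟨h, hm⟩
    exact mem_upE_some.1 hm
  · exact fun he => ⟨hT e he, mem_upE_some.2 he⟩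

lemma dE_eq_val_image (S : Set (Option (N.deleteVertex v).E)) :
    dE N v S = Subtype.val '' {a | some a ∈ S} := by
  ext e
  constructor
  · rintro ⟨h, hm⟩
    exact ⟨⟨e, h⟩, hm, rfl⟩
  · rintro ⟨a, ha, rfl⟩
    exact ⟨a.2, ha⟩

lemma ncard_dE_of_not_mem {S : Set (Option (N.deleteVertex v).E)}
    (hn : none ∉ S) : (dE N v S).ncard = S.ncard := by
  have hS : S = some '' {a | some a ∈ S} := by
    ext e
    cases e with
    | none => simp [hn]
    | some a => simp
  rw [dE_eq_val_image, ncard_image_of_injective _ Subtype.val_injective]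
  conv_rhs => rw [hS, ncard_image_of_injective _ (Option.some_injective _)]
  rfl

lemma dE_diff_none (S : Set (Option (N.deleteVertex v).E)) :
    dE N v (S \ {none}) = dE N v S := by
  ext e
  constructor
  · rintro ⟨h, hm⟩; exact ⟨h, hm.1⟩
  · rintro ⟨h, hm⟩; exact ⟨h, hm, by simp⟩

lemma ncard_dE_of_mem [Finite N.E] {S : Set (Option (N.deleteVertex v).E)}
    (hn : none ∈ S) : S.ncard = (dE N v S).ncard + 1 := by
  have h1 : S = insert none (S \ {none}) := by
    rw [Set.insert_diff_singleton, Set.insert_eq_self.2 hn]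
  have h2 : (dE N v (S \ {none})).ncard = (S \ {none}).ncard :=
    ncard_dE_of_not_mem (by simp)
  rw [dE_diff_none] at h2
  have hfin : (S \ {none}).Finite := Set.Finite.diff (Set.toFinite _)
  calc S.ncard = (insert none (S \ {none})).ncard := by rw [← h1]
    _ = (S \ {none}).ncard + 1 := Set.ncard_insert_of_notMem (by simp) hfin
    _ = (dE N v S).ncard + 1 := by rw [h2]

end helpers

end UMG
namespace UMG
open Set

section uverts

variable {N : UMG} {v x y : N.V} (hx : x ≠ v) (hy : y ≠ v)

lemma uverts_mono {T T' : Set N.E} (h : T ⊆ T') : N.uverts T ⊆ N.uverts T' :=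
  fun _ ⟨e, he, hi⟩ => ⟨e, h he, hi⟩

lemma mem_uverts_of_betw {S : Set N.E} {e : N.E} {p q : N.V}
    (he : e ∈ S) (hb : N.Betw e p q) :
    p ∈ N.uverts S ∧ q ∈ N.uverts S := by
  rcases hb with ⟨h1, h2⟩ | ⟨h1, h2⟩
  · exact ⟨⟨e, he, Or.inl h1⟩, ⟨e, he, Or.inr h2⟩⟩
  · exact ⟨⟨e, he, Or.inr h2⟩, ⟨e, he, Or.inl h1⟩⟩

lemma uverts_avoid {T : Set N.E} (hT : ∀ e ∈ T, N.fst e ≠ v ∧ N.snd e ≠ v)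
    {w : N.V} (hw : w ∈ N.uverts T) : w ≠ v := by
  obtain ⟨e, he, hi⟩ := hw
  rcases hi with h | h
  · exact h ▸ (hT e he).1
  · exact h ▸ (hT e he).2

lemma val_uverts (S : Set (Option (N.deleteVertex v).E)) (hn : none ∉ S) :
    Subtype.val '' (((N.deleteVertex v).addEdge ⟨x, hx⟩ ⟨y, hy⟩).uverts S)
      = N.uverts (dE N v S) := by
  ext w
  simp only [uverts, Incident, mem_setOf_eq, mem_image]
  constructor
  · rintro ⟨u, ⟨e, heS, hinc⟩, rfl⟩
    cases e with
    | none => exact absurd heS hn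
    | some a =>
      refine ⟨a.1, ⟨a.2, heS⟩, ?_⟩
      rcases hinc with h | h
      · exact Or.inl (congrArg Subtype.val h)
      · exact Or.inr (congrArg Subtype.val h)
  · rintro ⟨e, ⟨h, hm⟩, hinc⟩
    rcases hinc with h' | h'
    · exact ⟨⟨N.fst e, h.1⟩, ⟨some ⟨e, h⟩, hm, Or.inl rfl⟩, h'⟩
    · exact ⟨⟨N.snd e, h.2⟩, ⟨some ⟨e, h⟩, hm, Or.inr rfl⟩, h'⟩

lemma val_uverts' (S : Set (Option (N.deleteVertex v).E)) (hn : none ∈ S) :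
    Subtype.val '' (((N.deleteVertex v).addEdge ⟨x, hx⟩ ⟨y, hy⟩).uverts S)
      = N.uverts (dE N v S) ∪ {x, y} := by
  ext w
  simp only [uverts, Incident, mem_setOf_eq, mem_image, mem_union,
    mem_insert_iff, mem_singleton_iff]
  constructor
  · rintro ⟨u, ⟨e, heS, hinc⟩, rfl⟩
    cases e with
    | none =>
      rcases hinc with h | h
      · exact Or.inr (Or.inl (congrArg Subtype.val h).symm)
      · exact Or.inr (Or.inr (congrArg Subtype.val h).symm)
    | some a =>
      refine Or.inl ⟨a.1, ⟨a.2, heS⟩, ?_⟩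
      rcases hinc with h | h
      · exact Or.inl (congrArg Subtype.val h)
      · exact Or.inr (congrArg Subtype.val h)
  · rintro (⟨e, ⟨h, hm⟩, hinc⟩ | h | h)
    · rcases hinc with h' | h'
      · exact ⟨⟨N.fst e, h.1⟩, ⟨some ⟨e, h⟩, hm, Or.inl rfl⟩, h'⟩
      · exact ⟨⟨N.snd e, h.2⟩, ⟨some ⟨e, h⟩, hm, Or.inr rfl⟩, h'⟩
    · exact ⟨⟨x, hx⟩, ⟨none, hn, Or.inl rfl⟩, h.symm⟩
    · exact ⟨⟨y, hy⟩, ⟨none, hn, Or.inr rfl⟩, h.symm⟩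

lemma ncard_uverts_aug [Finite N.V] (S : Set (Option (N.deleteVertex v).E))
    (hn : none ∉ S) :
    (((N.deleteVertex v).addEdge ⟨x, hx⟩ ⟨y, hy⟩).uverts S).ncard
      = (N.uverts (dE N v S)).ncard := by
  conv_rhs => rw [← val_uverts hx hy S hn]
  exact (ncard_image_of_injective _ Subtype.val_injective).symm

lemma ncard_uverts_aug' [Finite N.V] (S : Set (Option (N.deleteVertex v).E))
    (hn : none ∈ S) :
    (((N.deleteVertex v).addEdge ⟨x, hx⟩ ⟨y, hy⟩).uverts S).ncard
      = (N.uverts (dE N v S) ∪ {x, y}).ncard := by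
  conv_rhs => rw [← val_uverts' hx hy S hn]
  exact (ncard_image_of_injective _ Subtype.val_injective).symm

lemma cardA_V [Finite N.V] :
    (Nat.card ((N.deleteVertex v).addEdge ⟨x, hx⟩ ⟨y, hy⟩).V : ℤ)
      = (Nat.card N.V : ℤ) - 1 := by
  haveI : Nonempty N.V := ⟨v⟩
  have h0 : Nat.card ((N.deleteVertex v).addEdge ⟨x, hx⟩ ⟨y, hy⟩).V
      = ({w : N.V | w ≠ v}).ncard := Nat.card_coe_set_eq _
  have h1 : {w : N.V | w ≠ v} = Set.univ \ {v} := by ext w; simp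
  have h2 : (Set.univ \ {v} : Set N.V).ncard = Nat.card N.V - 1 := by
    rw [Set.ncard_diff_singleton_of_mem (mem_univ v), ncard_univ]
  have h3 : 0 < Nat.card N.V := Nat.card_pos
  rw [h0, h1, h2]
  omega

lemma transfer_sparse [Finite N.V] [Finite N.E] {F : Set N.E}
    (hFsp : ∀ F' : Set N.E, F' ⊆ F → F'.Nonempty →
      (F'.ncard : ℤ) ≤ 2 * (N.uverts F').ncard - 2)
    (S : Set (Option (N.deleteVertex v).E)) (hn : none ∉ S)
    (hsub : dE N v S ⊆ F) (hne : S.Nonempty) :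
    (S.ncard : ℤ)
      ≤ 2 * (((N.deleteVertex v).addEdge ⟨x, hx⟩ ⟨y, hy⟩).uverts S).ncard - 2 := by
  have hdne : (dE N v S).Nonempty := by
    obtain ⟨e, he⟩ := hne
    cases e with
    | none => exact absurd he hn
    | some a => exact ⟨a.1, a.2, he⟩
  have h := hFsp _ hsub hdne
  rw [← ncard_dE_of_not_mem hn, ncard_uverts_aug hx hy S hn]
  exact h

end uverts

end UMG
namespace UMG
open Set

lemma dE_insert_none {N : UMG} {v : N.V} (S : Set (Option (N.deleteVertex v).E)) :
    dE N v (insert none S) = dE N v S := by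
  ext e
  constructor
  · rintro ⟨h, hm⟩
    rcases hm with hm | hm
    · exact absurd hm (Option.some_ne_none _)
    · exact ⟨h, hm⟩
  · rintro ⟨h, hm⟩
    exact ⟨h, Or.inr hm⟩

lemma incident_of_betw {N : UMG} {e : N.E} {p q : N.V} (hb : N.Betw e p q) :
    N.Incident e q := by
  rcases hb with ⟨h1, h2⟩ | ⟨h1, h2⟩
  · exact Or.inr h2
  · exact Or.inl h1

lemma not_mem_dE_of_incident {N : UMG} {v : N.V}
    {S : Set (Option (N.deleteVertex v).E)} {e : N.E}
    (hi : N.Incident e v) : e ∉ dE N v S := by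
  intro hmem
  obtain ⟨hf, hs⟩ := dE_avoid hmem
  rcases hi with h | h
  · exact hf h
  · exact hs h

lemma fwd_aux (N : UMG) [Finite N.V] [Finite N.E] (v x y z : N.V)
    (hx : x ≠ v) (hy : y ≠ v) (hz : z ≠ v)
    (e₁ e₂ e₃ : N.E) (h12 : e₁ ≠ e₂) (h13 : e₁ ≠ e₃) (h23 : e₂ ≠ e₃)
    (hb1 : N.Betw e₁ x v) (hb2 : N.Betw e₂ y v) (hb3 : N.Betw e₃ z v)
    (hall : ∀ e, N.Incident e v → e = e₁ ∨ e = e₂ ∨ e = e₃)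
    (hA : ((N.deleteVertex v).addEdge ⟨x, hx⟩ ⟨y, hy⟩).Spanning22) :
    N.Spanning22 := by
  classical
  obtain ⟨F', hfin', hsp', hcard'⟩ := hA
  have hinc1 : N.Incident e₁ v := incident_of_betw hb1
  have hinc2 : N.Incident e₂ v := incident_of_betw hb2
  have hinc3 : N.Incident e₃ v := incident_of_betw hb3
  set trio : Set N.E := {e₁, e₂, e₃} with htrio
  have hinctrio : ∀ e ∈ trio, N.Incident e v := by
    rintro e (rfl | rfl | rfl)
    exacts [hinc1, hinc2, hinc3]
  set NS : Set N.E := if none ∈ F' then {e₁, e₂, e₃} else {e₁, e₂} with hNS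
  have hNStrio : NS ⊆ trio := by
    rw [hNS]
    split
    · exact subset_rfl
    · rintro e (rfl | rfl) <;> simp [htrio]
  set F : Set N.E := dE N v F' ∪ NS with hF
  have hdis : Disjoint (dE N v F') NS := by
    rw [Set.disjoint_left]
    intro e he heNS
    exact not_mem_dE_of_incident (hinctrio e (hNStrio heNS)) he
  -- the key integer facts
  have hnV : (Nat.card ((N.deleteVertex v).addEdge ⟨x, hx⟩ ⟨y, hy⟩).V : ℤ)
      = (Nat.card N.V : ℤ) - 1 := cardA_V hx hy
  refine ⟨F, Set.toFinite F, ?_, ?_⟩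
  · -- sparsity
    intro F₀ hsub hne
    set O : Set N.E := F₀ \ trio with hO
    set P : Set N.E := F₀ ∩ trio with hP
    have hdec : P.ncard + O.ncard = F₀.ncard :=
      Set.ncard_inter_add_ncard_diff_eq_ncard F₀ trio
    have hOF' : O ⊆ dE N v F' := by
      intro e he
      rcases hsub he.1 with h | h
      · exact h
      · exact absurd (hNStrio h) he.2
    have hOavoid : ∀ e ∈ O, N.fst e ≠ v ∧ N.snd e ≠ v :=
      fun e he => dE_avoid (hOF' he)
    set S₀ : Set (Option (N.deleteVertex v).E) := upE N v O with hS₀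
    have hS₀sub : S₀ ⊆ F' := by
      rintro e ⟨a, rfl, haO⟩
      obtain ⟨h, hm⟩ := hOF' haO
      have : (⟨a.1, h⟩ : (N.deleteVertex v).E) = a := Subtype.ext rfl
      rwa [this] at hm
    have hdES₀ : dE N v S₀ = O := dE_upE hOavoid
    have huOsub : N.uverts O ⊆ N.uverts F₀ := uverts_mono Set.diff_subset
    have huO_le : (N.uverts O).ncard ≤ (N.uverts F₀).ncard :=
      ncard_le_ncard huOsub (Set.toFinite _)
    have hspO : O.Nonempty → (O.ncard : ℤ) ≤ 2 * (N.uverts O).ncard - 2 := by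
      intro hOne
      obtain ⟨e, he⟩ := hOne
      have hS₀ne : S₀.Nonempty :=
        ⟨some ⟨e, hOavoid e he⟩, mem_upE_some.2 he⟩
      have h := hsp' S₀ hS₀sub hS₀ne
      rw [ncard_uverts_aug hx hy S₀ none_not_mem_upE, hdES₀] at h
      have hcS₀ : S₀.ncard = O.ncard := by
        rw [← ncard_dE_of_not_mem (none_not_mem_upE (T := O)), hdES₀]
      rw [← hcS₀]; exact h
    have hPv : P.Nonempty → v ∈ N.uverts F₀ := by
      rintro ⟨e, heP⟩
      rcases heP.2 with rfl | rfl | rfl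
      exacts [(mem_uverts_of_betw heP.1 hb1).2, (mem_uverts_of_betw heP.1 hb2).2,
        (mem_uverts_of_betw heP.1 hb3).2]
    by_cases hPfull : e₁ ∈ F₀ ∧ e₂ ∈ F₀ ∧ e₃ ∈ F₀
    · -- all three new edges present
      obtain ⟨hm1, hm2, hm3⟩ := hPfull
      have hnone : none ∈ F' := by
        by_contra hnone
        have he₃F : e₃ ∈ F := hsub hm3
        rcases he₃F with h | h
        · exact not_mem_dE_of_incident hinc3 h
        · rw [hNS, if_neg hnone] at h
          rcases h with h | h
          · exact h13 h.symm
          · exact h23 h.symm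
      have hPtrio : P = trio := by
        apply Set.Subset.antisymm Set.inter_subset_right
        rintro e (rfl | rfl | rfl)
        exacts [⟨hm1, by simp [htrio]⟩, ⟨hm2, by simp [htrio]⟩,
          ⟨hm3, by simp [htrio]⟩]
      have hPcard : P.ncard = 3 := by
        rw [hPtrio, htrio]
        exact Set.ncard_eq_three.2 ⟨e₁, e₂, e₃, h12, h13, h23, rfl⟩
      set S₁ : Set (Option (N.deleteVertex v).E) := insert none S₀ with hS₁
      have hS₁sub : S₁ ⊆ F' := Set.insert_subset hnone hS₀sub
      have hs := hsp' S₁ hS₁sub ⟨none, Set.mem_insert _ _⟩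
      have hdES₁ : dE N v S₁ = O := by rw [hS₁, dE_insert_none, hdES₀]
      rw [ncard_uverts_aug' hx hy S₁ (Set.mem_insert _ _), hdES₁] at hs
      have hcS₁ : S₁.ncard = O.ncard + 1 := by
        rw [hS₁, Set.ncard_insert_of_notMem none_not_mem_upE (Set.toFinite _)]
        congr 1
        rw [← ncard_dE_of_not_mem (none_not_mem_upE (T := O)), hdES₀]
      replace hs : (S₁.ncard : ℤ) ≤ 2 * ((N.uverts O ∪ {x, y}).ncard : ℤ) - 2 := hs
      rw [hcS₁] at hs
      -- the lifted vertex set sits inside uverts F₀ minus v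
      have hXsub : N.uverts O ∪ {x, y} ⊆ N.uverts F₀ \ {v} := by
        rintro w (hw | hw)
        · exact ⟨huOsub hw, uverts_avoid hOavoid hw⟩
        · rcases hw with rfl | rfl
          · exact ⟨(mem_uverts_of_betw hm1 hb1).1, hx⟩
          · exact ⟨(mem_uverts_of_betw hm2 hb2).1, hy⟩
      have hvF₀ : v ∈ N.uverts F₀ := (mem_uverts_of_betw hm1 hb1).2
      have ht1 : (N.uverts O ∪ {x, y}).ncard ≤ (N.uverts F₀ \ {v}).ncard :=
        ncard_le_ncard hXsub (Set.toFinite _)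
      have ht2 : (N.uverts F₀ \ {v}).ncard = (N.uverts F₀).ncard - 1 :=
        Set.ncard_diff_singleton_of_mem hvF₀
      have hv1 : 1 ≤ (N.uverts F₀).ncard := by
        have : ({v} : Set N.V) ⊆ N.uverts F₀ := by simpa using hvF₀
        simpa using ncard_le_ncard this (Set.toFinite _)
      omega
    · -- at most two new edges present
      have hP2 : P.ncard ≤ 2 := by
        have hsub2 : ∃ a b : N.E, P ⊆ {a, b} := by
          rcases not_and_or.1 hPfull with h | h
          · refine ⟨e₂, e₃, ?_⟩
            rintro e ⟨heF, rfl | rfl | rfl⟩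
            exacts [absurd heF h, by simp, by simp]
          · rcases not_and_or.1 h with h | h
            · refine ⟨e₁, e₃, ?_⟩
              rintro e ⟨heF, rfl | rfl | rfl⟩
              exacts [by simp, absurd heF h, by simp]
            · refine ⟨e₁, e₂, ?_⟩
              rintro e ⟨heF, rfl | rfl | rfl⟩
              exacts [by simp, by simp, absurd heF h]
        obtain ⟨a, b, hsub2⟩ := hsub2
        calc P.ncard ≤ ({a, b} : Set N.E).ncard :=
              ncard_le_ncard hsub2 (Set.toFinite _)
          _ ≤ 2 := by
              calc ({a, b} : Set N.E).ncard ≤ ({b} : Set N.E).ncard + 1 :=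
                    Set.ncard_insert_le a {b}
                _ = 2 := by rw [Set.ncard_singleton]
      rcases Set.eq_empty_or_nonempty O with hOemp | hOne
      · -- F₀ consists only of new edges
        have hPne : P.Nonempty := by
          obtain ⟨e, he⟩ := hne
          refine ⟨e, he, ?_⟩
          by_contra het
          exact (Set.eq_empty_iff_forall_notMem.1 hOemp e) ⟨he, het⟩
        have hu2 : 2 ≤ (N.uverts F₀).ncard := by
          have hvm : v ∈ N.uverts F₀ := hPv hPne
          obtain ⟨e, heP⟩ := hPne
          have : ∃ w, w ≠ v ∧ w ∈ N.uverts F₀ := by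
            rcases heP.2 with rfl | rfl | rfl
            exacts [⟨x, hx, (mem_uverts_of_betw heP.1 hb1).1⟩,
              ⟨y, hy, (mem_uverts_of_betw heP.1 hb2).1⟩,
              ⟨z, hz, (mem_uverts_of_betw heP.1 hb3).1⟩]
          obtain ⟨w, hwv, hwm⟩ := this
          have hpair : ({w, v} : Set N.V) ⊆ N.uverts F₀ := by
            rintro u (rfl | rfl)
            exacts [hwm, hvm]
          calc 2 = ({w, v} : Set N.V).ncard := (Set.ncard_pair hwv).symm
            _ ≤ _ := ncard_le_ncard hpair (Set.toFinite _)
        have hOcard : O.ncard = 0 := by rw [hOemp]; exact Set.ncard_empty _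
        omega
      · have hOint := hspO hOne
        rcases Set.eq_empty_or_nonempty P with hPemp | hPne
        · have hPcard : P.ncard = 0 := by rw [hPemp]; exact Set.ncard_empty _
          omega
        · have hvF₀ : v ∈ N.uverts F₀ := hPv hPne
          have hvO : v ∉ N.uverts O := fun h => uverts_avoid hOavoid h rfl
          have hins : (insert v (N.uverts O)).ncard = (N.uverts O).ncard + 1 :=
            Set.ncard_insert_of_notMem hvO (Set.toFinite _)
          have hinsub : insert v (N.uverts O) ⊆ N.uverts F₀ :=
            Set.insert_subset hvF₀ huOsub
          have hle : (insert v (N.uverts O)).ncard ≤ (N.uverts F₀).ncard :=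
            ncard_le_ncard hinsub (Set.toFinite _)
          omega
  · -- the count
    have hcF : F.ncard = (dE N v F').ncard + NS.ncard :=
      Set.ncard_union_eq hdis (Set.toFinite _) (Set.toFinite _)
    rw [hnV] at hcard'
    by_cases hnone : none ∈ F'
    · have h1 : F'.ncard = (dE N v F').ncard + 1 := ncard_dE_of_mem hnone
      have h2 : NS.ncard = 3 := by
        rw [hNS, if_pos hnone]
        exact Set.ncard_eq_three.2 ⟨e₁, e₂, e₃, h12, h13, h23, rfl⟩
      omega
    · have h1 : (dE N v F').ncard = F'.ncard := ncard_dE_of_not_mem hnone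
      have h2 : NS.ncard = 2 := by
        rw [hNS, if_neg hnone]
        exact Set.ncard_pair h12
      omega

end UMG
namespace UMG
open Set

lemma otherEnd_ne {N : UMG} {v : N.V} {e : N.E} (hi : N.Incident e v)
    (hl : ¬ N.IsLoop e) : N.otherEnd v e ≠ v := by
  unfold otherEnd
  split_ifs with h
  · intro hsnd; exact hl (h.trans hsnd.symm)
  · rcases hi with h' | h'
    · exact absurd h' h
    · exact fun hf => h hf

lemma betw_otherEnd {N : UMG} {v : N.V} {e : N.E} (hi : N.Incident e v)
    (hl : ¬ N.IsLoop e) : N.Betw e (N.otherEnd v e) v := by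
  unfold otherEnd
  split_ifs with h
  · exact Or.inr ⟨h, rfl⟩
  · rcases hi with h' | h'
    · exact absurd h' h
    · exact Or.inl ⟨rfl, h'⟩

/-- Edges of `F0` induced on the vertex set `X`. -/
def indSet (N : UMG) (F0 : Set N.E) (X : Set N.V) : Set N.E :=
  {e | e ∈ F0 ∧ N.fst e ∈ X ∧ N.snd e ∈ X}

/-- `X` spans at least `2|X| - 2` edges of `F0`. -/
def TightSet (N : UMG) (F0 : Set N.E) (X : Set N.V) : Prop :=
  X.Nonempty ∧ 2 * (X.ncard : ℤ) - 2 ≤ ((indSet N F0 X).ncard : ℤ)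

lemma uverts_indSet_subset (N : UMG) (F0 : Set N.E) (X : Set N.V) :
    N.uverts (indSet N F0 X) ⊆ X := by
  rintro w ⟨e, he, hi⟩
  rcases hi with h | h
  · exact h ▸ he.2.1
  · exact h ▸ he.2.2

lemma tight_union (N : UMG) [Finite N.V] [Finite N.E] {F F0 : Set N.E}
    (hF0 : F0 ⊆ F)
    (hFsp : ∀ F' : Set N.E, F' ⊆ F → F'.Nonempty →
      (F'.ncard : ℤ) ≤ 2 * (N.uverts F').ncard - 2)
    {X Y : Set N.V} (hX : TightSet N F0 X) (hY : TightSet N F0 Y)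
    (hne : (X ∩ Y).Nonempty) : TightSet N F0 (X ∪ Y) := by
  have hIu : indSet N F0 X ∪ indSet N F0 Y ⊆ indSet N F0 (X ∪ Y) := by
    rintro e (⟨he, h1, h2⟩ | ⟨he, h1, h2⟩)
    · exact ⟨he, Or.inl h1, Or.inl h2⟩
    · exact ⟨he, Or.inr h1, Or.inr h2⟩
  have hIi : indSet N F0 X ∩ indSet N F0 Y = indSet N F0 (X ∩ Y) := by
    ext e
    simp only [indSet, mem_inter_iff, mem_setOf_eq]
    tauto
  have c3 : (indSet N F0 X ∪ indSet N F0 Y).ncard + (indSet N F0 (X ∩ Y)).ncard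
      = (indSet N F0 X).ncard + (indSet N F0 Y).ncard := by
    rw [← hIi]
    exact Set.ncard_union_add_ncard_inter _ _ (Set.toFinite _) (Set.toFinite _)
  have c4 : (X ∪ Y).ncard + (X ∩ Y).ncard = X.ncard + Y.ncard :=
    Set.ncard_union_add_ncard_inter _ _ (Set.toFinite _) (Set.toFinite _)
  have c5 : ((indSet N F0 (X ∩ Y)).ncard : ℤ) ≤ 2 * (X ∩ Y).ncard - 2 := by
    rcases Set.eq_empty_or_nonempty (indSet N F0 (X ∩ Y)) with hemp | hne'
    · have h1 : 0 < (X ∩ Y).ncard := (Set.ncard_pos (Set.toFinite _)).2 hne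
      rw [hemp, Set.ncard_empty]
      push_cast
      omega
    · have h := hFsp _ (fun e he => hF0 he.1) hne'
      have h2 : (N.uverts (indSet N F0 (X ∩ Y))).ncard ≤ (X ∩ Y).ncard :=
        ncard_le_ncard (uverts_indSet_subset N F0 _) (Set.toFinite _)
      have h2' : ((N.uverts (indSet N F0 (X ∩ Y))).ncard : ℤ) ≤ ((X ∩ Y).ncard : ℤ) := by
        exact_mod_cast h2
      linarith
  have hsub : (indSet N F0 X ∪ indSet N F0 Y).ncard ≤ (indSet N F0 (X ∪ Y)).ncard :=
    ncard_le_ncard hIu (Set.toFinite _)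
  refine ⟨hX.1.mono Set.subset_union_left, ?_⟩
  have h1 := hX.2
  have h2 := hY.2
  have c3' : ((indSet N F0 X ∪ indSet N F0 Y).ncard : ℤ)
      + (indSet N F0 (X ∩ Y)).ncard
      = (indSet N F0 X).ncard + (indSet N F0 Y).ncard := by exact_mod_cast c3
  have c4' : ((X ∪ Y).ncard : ℤ) + (X ∩ Y).ncard = X.ncard + Y.ncard := by
    exact_mod_cast c4
  have hsub' : ((indSet N F0 X ∪ indSet N F0 Y).ncard : ℤ)
      ≤ (indSet N F0 (X ∪ Y)).ncard := by exact_mod_cast hsub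
  linarith

end UMG
namespace UMG
open Set

lemma rev_aux (N : UMG) [Finite N.V] [Finite N.E] (hN : N.Spanning22)
    (v : N.V) (e₁ e₂ e₃ : N.E) (h12 : e₁ ≠ e₂) (h13 : e₁ ≠ e₃) (h23 : e₂ ≠ e₃)
    (hi1 : N.Incident e₁ v) (hi2 : N.Incident e₂ v) (hi3 : N.Incident e₃ v)
    (hl1 : ¬ N.IsLoop e₁) (hl2 : ¬ N.IsLoop e₂) (hl3 : ¬ N.IsLoop e₃)
    (hall : ∀ e, N.Incident e v → e = e₁ ∨ e = e₂ ∨ e = e₃) :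
    ∃ d d' : N.E, (d = e₁ ∨ d = e₂ ∨ d = e₃) ∧ (d' = e₁ ∨ d' = e₂ ∨ d' = e₃) ∧
      d ≠ d' ∧ ∃ (hx : N.otherEnd v d ≠ v) (hy : N.otherEnd v d' ≠ v),
      ((N.deleteVertex v).addEdge ⟨N.otherEnd v d, hx⟩
        ⟨N.otherEnd v d', hy⟩).Spanning22 := by
  classical
  obtain ⟨F, hFfin, hFsp, hFcard⟩ := hN
  set trio : Set N.E := {e₁, e₂, e₃} with htrio
  set Frest : Set N.E := F \ trio with hFrest
  have ha1 : N.otherEnd v e₁ ≠ v := otherEnd_ne hi1 hl1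
  have ha2 : N.otherEnd v e₂ ≠ v := otherEnd_ne hi2 hl2
  have ha3 : N.otherEnd v e₃ ≠ v := otherEnd_ne hi3 hl3
  have hbw1 : N.Betw e₁ (N.otherEnd v e₁) v := betw_otherEnd hi1 hl1
  have hbw2 : N.Betw e₂ (N.otherEnd v e₂) v := betw_otherEnd hi2 hl2
  have hbw3 : N.Betw e₃ (N.otherEnd v e₃) v := betw_otherEnd hi3 hl3
  have hrestavoid : ∀ e ∈ Frest, N.fst e ≠ v ∧ N.snd e ≠ v := by
    intro e he
    have hni : ¬ N.Incident e v := by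
      intro hi
      rcases hall e hi with rfl | rfl | rfl
      · exact he.2 (by simp [htrio])
      · exact he.2 (by simp [htrio])
      · exact he.2 (by simp [htrio])
    exact ⟨fun h => hni (Or.inl h), fun h => hni (Or.inr h)⟩
  have hn2 : 2 ≤ Nat.card N.V := by
    have h := ncard_le_ncard (Set.subset_univ
      ({N.otherEnd v e₁, v} : Set N.V)) (Set.toFinite _)
    rwa [ncard_pair ha1, ncard_univ] at h
  -- every uverts of a v-avoiding edge set has at most n - 1 vertices
  have havoid_card : ∀ T : Set N.E, (∀ e ∈ T, N.fst e ≠ v ∧ N.snd e ≠ v) →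
      ((N.uverts T).ncard : ℤ) ≤ (Nat.card N.V : ℤ) - 1 := by
    intro T hT
    have hsub : N.uverts T ⊆ Set.univ \ {v} := fun w hw =>
      ⟨Set.mem_univ _, uverts_avoid hT hw⟩
    have h1 : (N.uverts T).ncard ≤ (Set.univ \ {v} : Set N.V).ncard :=
      ncard_le_ncard hsub (Set.toFinite _)
    have h2 : (Set.univ \ {v} : Set N.V).ncard = Nat.card N.V - 1 := by
      rw [Set.ncard_diff_singleton_of_mem (mem_univ v), ncard_univ]
    omega
  have hrest_card : (Frest.ncard : ℤ) ≤ 2 * (Nat.card N.V : ℤ) - 4 := by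
    rcases Set.eq_empty_or_nonempty Frest with hemp | hne
    · rw [hemp, Set.ncard_empty]
      push_cast
      omega
    · have h := hFsp Frest Set.diff_subset hne
      have h2 := havoid_card Frest hrestavoid
      linarith
  have hdF : (F ∩ trio).ncard + Frest.ncard = F.ncard :=
    Set.ncard_inter_add_ncard_diff_eq_ncard F trio
  have hinter2 : 2 ≤ ((F ∩ trio).ncard : ℤ) := by omega
  by_cases hfull : e₁ ∈ F ∧ e₂ ∈ F ∧ e₃ ∈ F
  · -- all three edges of the spanning tight set are at v: blocker argument
    obtain ⟨hm1, hm2, hm3⟩ := hfull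
    have hTrioF : trio ⊆ F := by
      rintro e (rfl | rfl | rfl)
      exacts [hm1, hm2, hm3]
    have hinterEq : F ∩ trio = trio :=
      Set.Subset.antisymm Set.inter_subset_right
        (fun e he => ⟨hTrioF he, he⟩)
    have htrio3 : trio.ncard = 3 :=
      Set.ncard_eq_three.2 ⟨e₁, e₂, e₃, h12, h13, h23, rfl⟩
    -- main step: an unblocked pair yields the spanning certificate
    have main : ∀ d d' : N.E, d ∈ trio → d' ∈ trio → d ≠ d' →
        ∀ (hp : N.otherEnd v d ≠ v) (hq : N.otherEnd v d' ≠ v),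
        ¬ (∃ X : Set N.V, TightSet N Frest X ∧ N.otherEnd v d ∈ X ∧
            N.otherEnd v d' ∈ X) →
        ((N.deleteVertex v).addEdge ⟨N.otherEnd v d, hp⟩
          ⟨N.otherEnd v d', hq⟩).Spanning22 := by
      intro d d' hd hd' hdd hp hq hnb
      set p := N.otherEnd v d with hpdef
      set q := N.otherEnd v d' with hqdef
      refine ⟨insert none (upE N v Frest),
        (show (upE N v Frest).Finite from Set.toFinite _).insert none, ?_, ?_⟩
      · intro S hSsub hSne
        by_cases hnS : none ∈ S
        · by_contra hviol
          push_neg at hviol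
          set T : Set N.E := dE N v S with hT
          have hTsub : T ⊆ Frest := by
            have h1 : T ⊆ dE N v (insert none (upE N v Frest)) := dE_mono hSsub
            rwa [dE_insert_none, dE_upE hrestavoid] at h1
          have hcS : S.ncard = T.ncard + 1 := ncard_dE_of_mem hnS
          have hu := ncard_uverts_aug' hp hq S hnS
          set X : Set N.V := N.uverts T ∪ {p, q} with hX
          have hTight : TightSet N Frest X := by
            refine ⟨⟨p, Or.inr (by simp)⟩, ?_⟩
            have hTi : T ⊆ indSet N Frest X := by
              intro e he
              refine ⟨hTsub he, ?_, ?_⟩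
              · exact Or.inl ⟨e, he, Or.inl rfl⟩
              · exact Or.inl ⟨e, he, Or.inr rfl⟩
            have h1 : T.ncard ≤ (indSet N Frest X).ncard :=
              ncard_le_ncard hTi (Set.toFinite _)
            rw [hcS, hu] at hviol
            push_cast at hviol ⊢
            omega
          exact hnb ⟨X, hTight, Or.inr (by simp), Or.inr (by simp)⟩
        · have hSsub' : dE N v S ⊆ F := by
            have h1 : dE N v S ⊆ dE N v (insert none (upE N v Frest)) :=
              dE_mono hSsub
            rw [dE_insert_none, dE_upE hrestavoid] at h1
            exact h1.trans Set.diff_subset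
          exact transfer_sparse hp hq hFsp S hnS hSsub' hSne
      · have hc1 : (insert none (upE N v Frest)).ncard
            = (upE N v Frest).ncard + 1 :=
          Set.ncard_insert_of_notMem none_not_mem_upE (Set.toFinite _)
        have hc2 : (upE N v Frest).ncard = Frest.ncard := by
          rw [← ncard_dE_of_not_mem (none_not_mem_upE (T := Frest)),
            dE_upE hrestavoid]
        have hFc : (F.ncard : ℤ) = 2 * (Nat.card N.V : ℤ) - 2 := hFcard
        have h3 : (F ∩ trio).ncard = 3 := by rw [hinterEq, htrio3]
        rw [cardA_V hp hq]
        show ((insert none (upE N v Frest) : Set (Option (N.deleteVertex v).E)).ncard : ℤ)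
          = 2 * ((Nat.card N.V : ℤ) - 1) - 2
        omega
    -- choose an unblocked pair
    by_cases hab : ∃ X : Set N.V, TightSet N Frest X ∧ N.otherEnd v e₁ ∈ X ∧
        N.otherEnd v e₂ ∈ X
    · by_cases hac : ∃ X : Set N.V, TightSet N Frest X ∧ N.otherEnd v e₁ ∈ X ∧
          N.otherEnd v e₃ ∈ X
      · -- both pairs blocked: contradiction with sparsity of F
        exfalso
        obtain ⟨X1, hX1, ha1X, hb1X⟩ := hab
        obtain ⟨X2, hX2, ha2X, hc2X⟩ := hac
        have hXT : TightSet N Frest (X1 ∪ X2) :=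
          tight_union N Set.diff_subset hFsp hX1 hX2 ⟨_, ha1X, ha2X⟩
        set X := X1 ∪ X2 with hXdef
        have haX : N.otherEnd v e₁ ∈ X := Or.inl ha1X
        have hbX : N.otherEnd v e₂ ∈ X := Or.inl hb1X
        have hcX : N.otherEnd v e₃ ∈ X := Or.inr hc2X
        set Sstar : Set N.E := indSet N Frest X ∪ trio with hSstar
        have hdisj : Disjoint (indSet N Frest X) trio := by
          rw [Set.disjoint_left]
          intro e he het
          exact he.1.2 het
        have hSsubF : Sstar ⊆ F := by
          rintro e (he | he)
          · exact he.1.1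
          · exact hTrioF he
        have hScard : Sstar.ncard = (indSet N Frest X).ncard + 3 := by
          rw [hSstar, Set.ncard_union_eq hdisj (Set.toFinite _)
            (Set.toFinite _), htrio3]
        have hSne : Sstar.Nonempty := ⟨e₁, Or.inr (by simp [htrio])⟩
        have hsp := hFsp Sstar hSsubF hSne
        have husub : N.uverts Sstar ⊆ insert v X := by
          rintro w ⟨e, he, hi⟩
          rcases he with he | he
          · exact Or.inr (uverts_indSet_subset N Frest X ⟨e, he, hi⟩)
          · rcases he with rfl | rfl | rfl
            · rcases hbw1 with ⟨hf, hs⟩ | ⟨hf, hs⟩ <;> rcases hi with h | h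
              · exact Or.inr (h ▸ hf ▸ haX)
              · exact Or.inl (h.symm.trans hs)
              · exact Or.inl (h.symm.trans hf)
              · exact Or.inr (h ▸ hs ▸ haX)
            · rcases hbw2 with ⟨hf, hs⟩ | ⟨hf, hs⟩ <;> rcases hi with h | h
              · exact Or.inr (h ▸ hf ▸ hbX)
              · exact Or.inl (h.symm.trans hs)
              · exact Or.inl (h.symm.trans hf)
              · exact Or.inr (h ▸ hs ▸ hbX)
            · rcases hbw3 with ⟨hf, hs⟩ | ⟨hf, hs⟩ <;> rcases hi with h | h
              · exact Or.inr (h ▸ hf ▸ hcX)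
              · exact Or.inl (h.symm.trans hs)
              · exact Or.inl (h.symm.trans hf)
              · exact Or.inr (h ▸ hs ▸ hcX)
        have hu1 : (N.uverts Sstar).ncard ≤ (insert v X).ncard :=
          ncard_le_ncard husub (Set.toFinite _)
        have hu2 : (insert v X).ncard ≤ X.ncard + 1 := Set.ncard_insert_le v X
        have htight := hXT.2
        push_cast at *
        omega
      · exact ⟨e₁, e₃, Or.inl rfl, Or.inr (Or.inr rfl), h13, ha1, ha3,
          main e₁ e₃ (by simp [htrio]) (by simp [htrio]) h13 ha1 ha3 hac⟩
    · exact ⟨e₁, e₂, Or.inl rfl, Or.inr (Or.inl rfl), h12, ha1, ha2,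
        main e₁ e₂ (by simp [htrio]) (by simp [htrio]) h12 ha1 ha2 hab⟩
  · -- at most two of the three edges lie in the tight set: trivial reverse move
    have hinter_le : ((F ∩ trio).ncard : ℤ) ≤ 2 := by
      have hsub2 : ∃ a b : N.E, F ∩ trio ⊆ {a, b} := by
        rcases not_and_or.1 hfull with h | h
        · refine ⟨e₂, e₃, ?_⟩
          rintro e ⟨heF, rfl | rfl | rfl⟩
          exacts [absurd heF h, by simp, by simp]
        · rcases not_and_or.1 h with h | h
          · refine ⟨e₁, e₃, ?_⟩
            rintro e ⟨heF, rfl | rfl | rfl⟩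
            exacts [by simp, absurd heF h, by simp]
          · refine ⟨e₁, e₂, ?_⟩
            rintro e ⟨heF, rfl | rfl | rfl⟩
            exacts [by simp, by simp, absurd heF h]
      obtain ⟨a, b, hsub2⟩ := hsub2
      have h1 : (F ∩ trio).ncard ≤ ({a, b} : Set N.E).ncard :=
        ncard_le_ncard hsub2 (Set.toFinite _)
      have h2 : ({a, b} : Set N.E).ncard ≤ 2 := by
        calc ({a, b} : Set N.E).ncard ≤ ({b} : Set N.E).ncard + 1 :=
              Set.ncard_insert_le a {b}
          _ = 2 := by rw [Set.ncard_singleton]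
      push_cast
      omega
    refine ⟨e₁, e₂, Or.inl rfl, Or.inr (Or.inl rfl), h12, ha1, ha2,
      upE N v Frest, (show (upE N v Frest).Finite from Set.toFinite _), ?_, ?_⟩
    · intro S hSsub hSne
      have hnS : none ∉ S := fun h => none_not_mem_upE (hSsub h)
      have hSsub' : dE N v S ⊆ F := by
        have h1 : dE N v S ⊆ dE N v (upE N v Frest) := dE_mono hSsub
        rw [dE_upE hrestavoid] at h1
        exact h1.trans Set.diff_subset
      exact transfer_sparse ha1 ha2 hFsp S hnS hSsub' hSne
    · have hc2 : (upE N v Frest).ncard = Frest.ncard := by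
        rw [← ncard_dE_of_not_mem (none_not_mem_upE (T := Frest)),
          dE_upE hrestavoid]
      rw [cardA_V ha1 ha2]
      show ((upE N v Frest : Set (Option (N.deleteVertex v).E)).ncard : ℤ)
        = 2 * ((Nat.card N.V : ℤ) - 1) - 2
      omega

end UMG

/-- The uncolored Henneberg (H2) move preserves being
`(2,2)`-spanning in both directions: the result of an (H2) move on a
`(2,2)`-spanning graph is `(2,2)`-spanning, and at any degree-three vertex of
a `(2,2)`-spanning graph some reverse (H2) move (deleting the vertex and
adding back an edge between two of its neighbors) yields a `(2,2)`-spanning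
graph. -/
theorem h2_preserves_spanning22 :
    (∀ M N : UMG, Finite M.V → Finite M.E → Finite N.V → Finite N.E →
      M.Spanning22 → UMG.H2Rel M N → N.Spanning22) ∧
    (∀ N : UMG, Finite N.V → Finite N.E → N.Spanning22 →
      ∀ (v : N.V) (e₁ e₂ e₃ : N.E),
        e₁ ≠ e₂ → e₁ ≠ e₃ → e₂ ≠ e₃ →
        N.Incident e₁ v → N.Incident e₂ v → N.Incident e₃ v →
        ¬ N.IsLoop e₁ → ¬ N.IsLoop e₂ → ¬ N.IsLoop e₃ →
        (∀ e, N.Incident e v → e = e₁ ∨ e = e₂ ∨ e = e₃) →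
        ∃ d d' : N.E, (d = e₁ ∨ d = e₂ ∨ d = e₃) ∧
          (d' = e₁ ∨ d' = e₂ ∨ d' = e₃) ∧ d ≠ d' ∧
          ∃ (hx : N.otherEnd v d ≠ v) (hy : N.otherEnd v d' ≠ v),
            ((N.deleteVertex v).addEdge
              ⟨N.otherEnd v d, hx⟩ ⟨N.otherEnd v d', hy⟩).Spanning22) := by
  constructor
  · rintro M N hMV hME hNV hNE hM
    rintro ⟨w, x, y, ⟨e₁, e₂, e₃, h12, h13, h23, hb1, hb2, ⟨z, hz, hb3⟩, hallw⟩,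
      hx, hy, hiso⟩
    haveI := hNV; haveI := hNE
    exact UMG.fwd_aux N w x y z hx hy hz e₁ e₂ e₃ h12 h13 h23 hb1 hb2 hb3 hallw
      (UMG.spanning22_of_iso (UMG.iso_symm hiso) hM)
  · rintro N hNV hNE hN v e₁ e₂ e₃ h12 h13 h23 hi1 hi2 hi3 hl1 hl2 hl3 hall
    haveI := hNV; haveI := hNE
    exact UMG.rev_aux N hN v e₁ e₂ e₃ h12 h13 h23 hi1 hi2 hi3 hl1 hl2 hl3 hall
end
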